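/- For all u, u̇, w ∈ ℝ³ with u ≠ 0 and every scalar Ψ ∈ ℝ, the pair of conditions [𝓔(u, u̇, w) = 0 and w·u = ‖u‖²·Ψ] holds if and only if w = 3((u̇·u)/‖u‖²)·u̇ − 3((u̇·u)²/‖u‖⁴)·u − m·(u × u̇) + Ψ·u. (The variational equation supplemented by the condition ü·u = ‖u‖²Ψ is equivalent to an equation solved for the third derivative.) -/

import Mathlib

noncomputable section
open RealInnerProductSpace

/-- Three-dimensional Euclidean space. -/
abbrev E3 := EuclideanSpace ℝ (Fin 3)

/-- The cross product on ℝ³. -/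
def cross (a b : E3) : E3 :=
  (WithLp.equiv 2 (Fin 3 → ℝ)).symm
    ![a 1 * b 2 - a 2 * b 1, a 2 * b 0 - a 0 * b 2, a 0 * b 1 - a 1 * b 0]

/-- The Euler–Poisson expression
𝓔(u, u̇, ü) = (ü × u)/‖u‖³ − 3((u̇·u)/‖u‖⁵)(u̇ × u) + (m/‖u‖³)(‖u‖² u̇ − (u̇·u) u). -/
def EP (m : ℝ) (u du ddu : E3) : E3 :=
  (‖u‖ ^ 3)⁻¹ • cross ddu u - (3 * ⟪du, u⟫ / ‖u‖ ^ 5) • cross du u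
    + (m / ‖u‖ ^ 3) • (‖u‖ ^ 2 • du - ⟪du, u⟫ • u)

lemma norm_sq_expand (u : E3) : ‖u‖^2 = u 0 * u 0 + u 1 * u 1 + u 2 * u 2 := by
  rw [← real_inner_self_eq_norm_sq]
  simp only [PiLp.inner_apply, Fin.sum_univ_three, RCLike.inner_apply, conj_trivial]

lemma triple (u w : E3) : cross u (cross w u) = ‖u‖^2 • w - ⟪w,u⟫ • u := by
  ext i
  fin_cases i <;>
    simp [cross, norm_sq_expand, PiLp.inner_apply, Fin.sum_univ_three] <;> ring

lemma cross_self0 (u : E3) : cross u u = 0 := by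
  ext i; fin_cases i <;> simp [cross] <;> ring

lemma cross_smul_right (a : ℝ) (u v : E3) : cross u (a • v) = a • cross u v := by
  ext i; fin_cases i <;> simp [cross] <;> ring

lemma cross_sub_right (u v w : E3) : cross u (v - w) = cross u v - cross u w := by
  ext i; fin_cases i <;> simp [cross] <;> ring

lemma cross_add_right (u v w : E3) : cross u (v + w) = cross u v + cross u w := by
  ext i; fin_cases i <;> simp [cross] <;> ring

lemma crossE3_anticomm (a b : E3) : cross a b = -cross b a := by
  ext i; fin_cases i <;> simp [cross] <;> ring

lemma cross_neg_right (u v : E3) : cross u (-v) = -cross u v := by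
  ext i; fin_cases i <;> simp [cross] <;> ring

lemma inner_cross (u du : E3) : ⟪cross u du, u⟫ = 0 := by
  simp [cross, PiLp.inner_apply, Fin.sum_univ_three]; ring

lemma EP_eq (m : ℝ) (u du ddu : E3) :
    EP m u du ddu = (‖u‖ ^ 3)⁻¹ •
      (cross ddu u - (3 * ⟪du, u⟫ / ‖u‖ ^ 2) • cross du u
        + m • (‖u‖ ^ 2 • du - ⟪du, u⟫ • u)) := by
  unfold EP
  match_scalars <;> field_simp <;> ring


/-- the variational equation 𝓔(u, u̇, w) = 0 supplemented by the
condition w·u = ‖u‖²Ψ is equivalent to an equation solved for the third derivative. -/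
theorem EP_supplemented_solved_for_third_derivative (m : ℝ)
    (u du w : E3) (hu : u ≠ 0) (Ψ : ℝ) :
    (EP m u du w = 0 ∧ ⟪w, u⟫ = ‖u‖ ^ 2 * Ψ) ↔
      w = (3 * (⟪du, u⟫ / ‖u‖ ^ 2)) • du - (3 * (⟪du, u⟫ ^ 2 / ‖u‖ ^ 4)) • u
            - m • cross u du + Ψ • u := by
  have hn : ‖u‖ ≠ 0 := norm_ne_zero_iff.mpr hu
  have hn3 : ((‖u‖:ℝ) ^ 3)⁻¹ ≠ 0 := by positivity
  have h2pos : (0:ℝ) < ‖u‖^2 := by positivity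
  have hx : cross u (cross u du) = ⟪du,u⟫ • u - ‖u‖^2 • du := by
    rw [crossE3_anticomm u du, cross_neg_right, triple u du]; abel
  constructor
  · rintro ⟨h1, h2⟩
    rw [EP_eq, smul_eq_zero] at h1
    rcases h1 with h1 | h1
    · exact absurd h1 hn3
    have hF : cross w u = (3 * ⟪du, u⟫ / ‖u‖ ^ 2) • cross du u
        - m • (‖u‖ ^ 2 • du - ⟪du, u⟫ • u) := by
      linear_combination (norm := module) h1
    have key := triple u w
    rw [hF, cross_sub_right, cross_smul_right, cross_smul_right, cross_sub_right,
      cross_smul_right, cross_smul_right, cross_self0, triple u du, h2] at key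
    simp only [smul_zero, sub_zero] at key
    have hfin : (‖u‖^2) • w = (‖u‖^2) •
        ((3 * (⟪du, u⟫ / ‖u‖ ^ 2)) • du - (3 * (⟪du, u⟫ ^ 2 / ‖u‖ ^ 4)) • u
          - m • cross u du + Ψ • u) := by
      have hw : (‖u‖^2) • w = (3 * ⟪du, u⟫ / ‖u‖ ^ 2) • (‖u‖ ^ 2 • du - ⟪du, u⟫ • u)
          - m • (‖u‖ ^ 2 • cross u du) + (‖u‖ ^ 2 * Ψ) • u := by
        linear_combination (norm := module) -key
      rw [hw]
      match_scalars <;> field_simp <;> ring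
    exact smul_right_injective E3 (ne_of_gt h2pos) hfin
  · intro h
    subst h
    have hW : cross ((3 * (⟪du, u⟫ / ‖u‖ ^ 2)) • du - (3 * (⟪du, u⟫ ^ 2 / ‖u‖ ^ 4)) • u
          - m • cross u du + Ψ • u) u
        = (3 * (⟪du, u⟫ / ‖u‖ ^ 2)) • cross du u
          - m • (‖u‖ ^ 2 • du - ⟪du, u⟫ • u) := by
      rw [crossE3_anticomm, cross_add_right, cross_sub_right, cross_sub_right,
        cross_smul_right, cross_smul_right, cross_smul_right,
        cross_smul_right Ψ u u, cross_self0, hx, crossE3_anticomm du u]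
      module
    constructor
    · rw [EP_eq, smul_eq_zero]
      right
      rw [hW]
      match_scalars <;> field_simp <;> ring
    · rw [inner_add_left, inner_sub_left, inner_sub_left, real_inner_smul_left,
        real_inner_smul_left, real_inner_smul_left, real_inner_smul_left,
        inner_cross, real_inner_self_eq_norm_sq]
      field_simp
      ring
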